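/- Let N and M be Kronecker representations over an infinite field K and let φ = (φ^1, φ^2) be the generic homomorphism from N to M (entries of φ^1, φ^2 are elements of a rational function field F over K constrained only by the intertwining equations, parametrizing Hom_K(N,M) generically). Then N is a subrepresentation of M over K if and only if φ^1 and φ^2, viewed as matrices over F, both have full column rank. -/

import Mathlib

open Matrix

/-- Over a field, a rectangular matrix has injective `mulVecLin` iff some maximal
minor (a square submatrix obtained by choosing rows) has unit determinant. -/
lemma inj_mulVecLin_iff_exists_minor {F : Type*} [Field F] {m n : ℕ}
    (A : Matrix (Fin m) (Fin n) F) :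
    Function.Injective A.mulVecLin ↔
      ∃ f : Fin n → Fin m, Function.Injective f ∧ IsUnit (A.submatrix f id).det := by
  constructor
  · intro h
    -- rank considerations: rows of A span F^n
    have hrank : A.rank = n := by
      have := LinearMap.finrank_range_of_inj h
      simpa [Matrix.rank, Module.finrank_pi] using this
    have hspan : Submodule.span F (Set.range A) = ⊤ := by
      have h1 : Submodule.span F (Set.range A) = LinearMap.range (Aᵀ.mulVecLin) := by
        rw [Matrix.range_mulVecLin]; rfl
      have h2 : Module.finrank F (Submodule.span F (Set.range A)) = n := by
        rw [h1]
        have := Matrix.rank_transpose A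
        rw [hrank] at this
        simpa [Matrix.rank] using this
      apply Submodule.eq_top_of_finrank_eq
      simp [h2, Module.finrank_pi]
    obtain ⟨t, hts, hsp, hli⟩ := exists_linearIndependent F (Set.range A)
    rw [hspan] at hsp
    have htfin : t.Finite := hli.setFinite
    haveI : Fintype t := htfin.fintype
    have hb : Module.finrank F (Fin n → F) = Fintype.card t := by
      have b : Module.Basis t F (Fin n → F) := Module.Basis.mk hli (by rw [Subtype.range_coe, hsp])
      exact Module.finrank_eq_card_basis b
    have hcard : Fintype.card t = n := by
      rw [← hb]; simp [Module.finrank_pi]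
    let e : Fin n ≃ t := (Fintype.equivFinOfCardEq hcard).symm
    have hchoice : ∀ i : Fin n, ∃ j : Fin m, A j = (e i : Fin n → F) := fun i =>
      hts (e i).2
    choose f hf using hchoice
    refine ⟨f, ?_, ?_⟩
    · intro i j hij
      have : (e i : Fin n → F) = (e j : Fin n → F) := by rw [← hf, ← hf, hij]
      exact e.injective (Subtype.ext this)
    · rw [← Matrix.isUnit_iff_isUnit_det, ← Matrix.linearIndependent_rows_iff_isUnit]
      have : (fun i => (A.submatrix f id) i) = fun i => ((e i : Fin n → F)) := by
        funext i; exact hf i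
      change LinearIndependent F (fun i => (A.submatrix f id) i)
      rw [this]
      exact hli.comp (fun i => e i) e.injective
  · rintro ⟨f, -, hdet⟩
    have hinj : Function.Injective ((A.submatrix f id).mulVec) :=
      Matrix.mulVec_injective_iff_isUnit.2 ((Matrix.isUnit_iff_isUnit_det _).2 hdet)
    rw [← LinearMap.ker_eq_bot, Matrix.ker_mulVecLin_eq_bot_iff]
    intro v hv
    have h0 : (A.submatrix f id).mulVec v = (A.submatrix f id).mulVec 0 := by
      rw [Matrix.mulVec_zero]
      funext i
      simp only [Matrix.mulVec, Matrix.submatrix, dotProduct, id]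
      have := congrFun hv (f i)
      simpa [Matrix.mulVec, dotProduct] using this
    exact hinj h0

lemma det_submatrix_map{R S : Type*} [CommRing R] [CommRing S] (σ : R →+* S)
    {m n : ℕ} (A : Matrix (Fin m) (Fin n) R) (f : Fin n → Fin m) :
    ((A.map σ).submatrix f id).det = σ ((A.submatrix f id).det) := by
  rw [Matrix.submatrix_map, ← RingHom.mapMatrix_apply, ← RingHom.map_det]


/-- let `φ = (φ¹, φ²)` be a generic homomorphism from the Kronecker
representation `N = (Nα, Nβ)` to `M = (Mα, Mβ)` over an infinite field `K`: its
entries are polynomials in variables `x₁, …, x_Nv` satisfying the intertwining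
equations, and every `K`-homomorphism `N → M` arises by specializing the variables.
Then `N` is a subrepresentation of `M` over `K` iff `φ¹` and `φ²`, viewed over the
rational function field `F = Frac(K[x₁,…,x_Nv])`, have full column rank. -/
theorem generic_hom_subrep_iff (K : Type*) [Field K] [Infinite K]
    (m₁ m₂ n₁ n₂ Nv : ℕ)
    (Mα Mβ : Matrix (Fin m₂) (Fin m₁) K) (Nα Nβ : Matrix (Fin n₂) (Fin n₁) K)
    (φ₁ : Matrix (Fin m₁) (Fin n₁) (MvPolynomial (Fin Nv) K))
    (φ₂ : Matrix (Fin m₂) (Fin n₂) (MvPolynomial (Fin Nv) K))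
    -- φ is a homomorphism over the polynomial ring
    (hhom₁ : Mα.map (algebraMap K (MvPolynomial (Fin Nv) K)) * φ₁ =
      φ₂ * Nα.map (algebraMap K (MvPolynomial (Fin Nv) K)))
    (hhom₂ : Mβ.map (algebraMap K (MvPolynomial (Fin Nv) K)) * φ₁ =
      φ₂ * Nβ.map (algebraMap K (MvPolynomial (Fin Nv) K)))
    -- genericity: every K-homomorphism N → M is a specialization of φ
    (hgen : ∀ (ψ₁ : Matrix (Fin m₁) (Fin n₁) K) (ψ₂ : Matrix (Fin m₂) (Fin n₂) K),
      Mα * ψ₁ = ψ₂ * Nα → Mβ * ψ₁ = ψ₂ * Nβ →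
      ∃ v : Fin Nv → K, φ₁.map (MvPolynomial.eval v) = ψ₁ ∧ φ₂.map (MvPolynomial.eval v) = ψ₂) :
    (∃ (ψ₁ : Matrix (Fin m₁) (Fin n₁) K) (ψ₂ : Matrix (Fin m₂) (Fin n₂) K),
        Function.Injective ψ₁.mulVecLin ∧ Function.Injective ψ₂.mulVecLin ∧
        Mα * ψ₁ = ψ₂ * Nα ∧ Mβ * ψ₁ = ψ₂ * Nβ) ↔
    (Function.Injective (φ₁.map (algebraMap (MvPolynomial (Fin Nv) K)
        (FractionRing (MvPolynomial (Fin Nv) K)))).mulVecLin ∧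
      Function.Injective (φ₂.map (algebraMap (MvPolynomial (Fin Nv) K)
        (FractionRing (MvPolynomial (Fin Nv) K)))).mulVecLin) := by
  have key : ∀ {m n : ℕ} (φ : Matrix (Fin m) (Fin n) (MvPolynomial (Fin Nv) K)) (v : Fin Nv → K),
      Function.Injective (φ.map (MvPolynomial.eval v)).mulVecLin →
      Function.Injective ((φ.map (algebraMap (MvPolynomial (Fin Nv) K)
        (FractionRing (MvPolynomial (Fin Nv) K)))).mulVecLin) := by
    intro m n φ v h
    obtain ⟨f, hf, hdet⟩ := (inj_mulVecLin_iff_exists_minor _).1 h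
    refine (inj_mulVecLin_iff_exists_minor _).2 ⟨f, hf, ?_⟩
    rw [det_submatrix_map]
    refine isUnit_iff_ne_zero.2 ?_
    refine (map_ne_zero_iff _ (IsFractionRing.injective (MvPolynomial (Fin Nv) K)
      (FractionRing (MvPolynomial (Fin Nv) K)))).2 ?_
    intro h0
    rw [det_submatrix_map, h0, map_zero] at hdet
    exact hdet.ne_zero rfl
  constructor
  · rintro ⟨ψ₁, ψ₂, hi1, hi2, hc1, hc2⟩
    obtain ⟨v, hv1, hv2⟩ := hgen ψ₁ ψ₂ hc1 hc2
    exact ⟨key φ₁ v (by rw [hv1]; exact hi1), key φ₂ v (by rw [hv2]; exact hi2)⟩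
  · rintro ⟨h1, h2⟩
    obtain ⟨f₁, hf₁, hd₁⟩ := (inj_mulVecLin_iff_exists_minor _).1 h1
    obtain ⟨f₂, hf₂, hd₂⟩ := (inj_mulVecLin_iff_exists_minor _).1 h2
    rw [det_submatrix_map] at hd₁ hd₂
    have hn₁ : (φ₁.submatrix f₁ id).det ≠ 0 := by
      intro h; rw [h, map_zero] at hd₁; exact hd₁.ne_zero rfl
    have hn₂ : (φ₂.submatrix f₂ id).det ≠ 0 := by
      intro h; rw [h, map_zero] at hd₂; exact hd₂.ne_zero rfl
    have hprod : (φ₁.submatrix f₁ id).det * (φ₂.submatrix f₂ id).det ≠ 0 :=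
      mul_ne_zero hn₁ hn₂
    have hex : ∃ v : Fin Nv → K,
        MvPolynomial.eval v ((φ₁.submatrix f₁ id).det * (φ₂.submatrix f₂ id).det) ≠ 0 := by
      by_contra hall
      push_neg at hall
      exact hprod (MvPolynomial.funext fun x => by simpa using hall x)
    obtain ⟨v, hv⟩ := hex
    rw [_root_.map_mul] at hv
    have hv₁ : MvPolynomial.eval v (φ₁.submatrix f₁ id).det ≠ 0 := left_ne_zero_of_mul hv
    have hv₂ : MvPolynomial.eval v (φ₂.submatrix f₂ id).det ≠ 0 := right_ne_zero_of_mul hv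
    refine ⟨φ₁.map (MvPolynomial.eval v), φ₂.map (MvPolynomial.eval v), ?_, ?_, ?_, ?_⟩
    · exact (inj_mulVecLin_iff_exists_minor _).2 ⟨f₁, hf₁,
        by rw [det_submatrix_map]; exact isUnit_iff_ne_zero.2 hv₁⟩
    · exact (inj_mulVecLin_iff_exists_minor _).2 ⟨f₂, hf₂,
        by rw [det_submatrix_map]; exact isUnit_iff_ne_zero.2 hv₂⟩
    · have h := congrArg (fun X => X.map (MvPolynomial.eval v : MvPolynomial (Fin Nv) K →+* K)) hhom₁
      have hid : ∀ {a b : ℕ} (A : Matrix (Fin a) (Fin b) K),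
          A.map (⇑(MvPolynomial.eval v) ∘ ⇑(MvPolynomial.C)) = A := fun A => by
        ext i j; simp
      simpa [Matrix.map_mul, Matrix.map_map, MvPolynomial.algebraMap_eq, hid] using h
    · have h := congrArg (fun X => X.map (MvPolynomial.eval v : MvPolynomial (Fin Nv) K →+* K)) hhom₂
      have hid : ∀ {a b : ℕ} (A : Matrix (Fin a) (Fin b) K),
          A.map (⇑(MvPolynomial.eval v) ∘ ⇑(MvPolynomial.C)) = A := fun A => by
        ext i j; simp
      simpa [Matrix.map_mul, Matrix.map_map, MvPolynomial.algebraMap_eq, hid] using h
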